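/- arXiv:1609.08130 — 2 statements merged into one kernel-verified Lean document; each statement's English description precedes it below -/
import Mathlib

section
/- Suppose M ∈ ℂ^{p×n} and G ∈ ℂ^{n×b} satisfy A[P,B] = M·G exactly, and let (S, R, T) be an ε-accurate interpolative decomposition of the stacked matrix [A[O,B]; G], i.e. ‖[A[O,R]; G[:,R]] - [A[O,S]; G[:,S]]·T‖ ≤ ε‖[A[O,B]; G]‖. Then the same skeleton set S and interpolation matrix T give an interpolative decomposition of the full far-field block [A[O,B]; A[P,B]] with error at most ε·max(1, ‖M‖)·‖[A[O,B]; G]‖, i.e. ‖[A[O,R]; A[P,R]] - [A[O,S]; A[P,S]]·T‖ ≤ ε·max(1,‖M‖)·‖[A[O,B]; G]‖. -/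
open Matrix
open scoped Matrix.Norms.L2Operator

lemma fromRows_submatrix_id {m₁ m₂ n n' : Type*} (A : Matrix m₁ n ℂ) (B : Matrix m₂ n ℂ)
    (f : n' → n) :
    (Matrix.fromRows A B).submatrix id f =
      Matrix.fromRows (A.submatrix id f) (B.submatrix id f) := by
  ext i j
  cases i <;> rfl

lemma mul_submatrix_id' {p q r r' : Type*} [Fintype q] (M : Matrix p q ℂ) (G : Matrix q r ℂ)
    (f : r' → r) : (M * G).submatrix id f = M * G.submatrix id f := by
  ext i j
  simp [Matrix.mul_apply]

lemma euclid_norm_symm {ι : Type*} [Fintype ι] (w : ι → ℂ) :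
    ‖(WithLp.equiv 2 (ι → ℂ)).symm w‖ = Real.sqrt (∑ i, ‖w i‖^2) := by
  rw [EuclideanSpace.norm_eq]
  simp

lemma norm_fromRows_mul_le {m₁ m₂ k nn : Type*} [Fintype m₁] [Fintype m₂] [Fintype k]
    [Fintype nn] [DecidableEq nn] [DecidableEq k]
    (A : Matrix m₁ nn ℂ) (B : Matrix k nn ℂ) (M : Matrix m₂ k ℂ) :
    ‖Matrix.fromRows A (M * B)‖ ≤ max 1 ‖M‖ * ‖Matrix.fromRows A B‖ := by
  have hmax : (0:ℝ) ≤ max 1 ‖M‖ := le_trans zero_le_one (le_max_left _ _)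
  have hmax1 : (1:ℝ) ≤ max 1 ‖M‖ := le_max_left _ _
  have hmaxM : ‖M‖ ≤ max 1 ‖M‖ := le_max_right _ _
  conv_lhs => rw [Matrix.l2_opNorm_def]
  refine ContinuousLinearMap.opNorm_le_bound _
    (mul_nonneg hmax (norm_nonneg _)) fun x => ?_
  show ‖Matrix.toEuclideanLin (Matrix.fromRows A (M * B)) x‖ ≤
    max 1 ‖M‖ * ‖Matrix.fromRows A B‖ * ‖x‖
  set y : nn → ℂ := WithLp.equiv 2 (nn → ℂ) x with hy
  have hL : Matrix.toEuclideanLin (Matrix.fromRows A (M * B)) x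
      = (WithLp.equiv 2 ((m₁ ⊕ m₂) → ℂ)).symm
          (Sum.elim (A *ᵥ y) (M *ᵥ (B *ᵥ y))) := by
    show (WithLp.equiv 2 ((m₁ ⊕ m₂) → ℂ)).symm ((Matrix.fromRows A (M * B)) *ᵥ y) = _
    rw [Matrix.fromRows_mulVec, ← Matrix.mulVec_mulVec]
  have hF : Matrix.toEuclideanLin (Matrix.fromRows A B) x
      = (WithLp.equiv 2 ((m₁ ⊕ k) → ℂ)).symm (Sum.elim (A *ᵥ y) (B *ᵥ y)) := by
    show (WithLp.equiv 2 ((m₁ ⊕ k) → ℂ)).symm ((Matrix.fromRows A B) *ᵥ y) = _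
    rw [Matrix.fromRows_mulVec]
  set a : ℝ := ∑ i, ‖(A *ᵥ y) i‖^2 with ha
  set b : ℝ := ∑ j, ‖(B *ᵥ y) j‖^2 with hb
  set c : ℝ := ∑ j, ‖(M *ᵥ (B *ᵥ y)) j‖^2 with hc
  have ha0 : 0 ≤ a := Finset.sum_nonneg fun _ _ => sq_nonneg _
  have hb0 : 0 ≤ b := Finset.sum_nonneg fun _ _ => sq_nonneg _
  have hc0 : 0 ≤ c := Finset.sum_nonneg fun _ _ => sq_nonneg _
  have hLnorm : ‖Matrix.toEuclideanLin (Matrix.fromRows A (M * B)) x‖ = Real.sqrt (a + c) := by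
    rw [hL, euclid_norm_symm, Fintype.sum_sum_type]
    simp [ha, hc]
  have hFnorm : ‖Matrix.toEuclideanLin (Matrix.fromRows A B) x‖ = Real.sqrt (a + b) := by
    rw [hF, euclid_norm_symm, Fintype.sum_sum_type]
    simp [ha, hb]
  -- bound c via the operator norm of M
  have hMv : Real.sqrt c ≤ ‖M‖ * Real.sqrt b := by
    rw [show Real.sqrt c = ‖(WithLp.equiv 2 (m₂ → ℂ)).symm (M *ᵥ (B *ᵥ y))‖ from
        (euclid_norm_symm _).symm,
      show Real.sqrt b = ‖(WithLp.equiv 2 (k → ℂ)).symm (B *ᵥ y)‖ from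
        (euclid_norm_symm _).symm]
    exact Matrix.l2_opNorm_mulVec M ((WithLp.equiv 2 (k → ℂ)).symm (B *ᵥ y))
  have hcb : c ≤ ‖M‖^2 * b := by
    nlinarith [mul_self_le_mul_self (Real.sqrt_nonneg c) hMv, Real.sq_sqrt hc0,
      Real.sq_sqrt hb0, Real.sqrt_nonneg c, Real.sqrt_nonneg b, norm_nonneg M]
  -- bound the Euclidean image of the reference matrix
  have hFle : Real.sqrt (a + b) ≤ ‖Matrix.fromRows A B‖ * ‖x‖ := by
    rw [← hFnorm]
    exact (Matrix.fromRows A B).l2_opNorm_mulVec x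
  rw [hLnorm]
  have step1 : Real.sqrt (a + c) ≤ max 1 ‖M‖ * Real.sqrt (a + b) := by
    have h1 : a + c ≤ (max 1 ‖M‖)^2 * (a + b) := by
      nlinarith [hcb, ha0, hb0, mul_self_le_mul_self (norm_nonneg M) hmaxM,
        mul_le_mul hmax1 hmax1 zero_le_one hmax]
    calc Real.sqrt (a + c) ≤ Real.sqrt ((max 1 ‖M‖)^2 * (a + b)) := Real.sqrt_le_sqrt h1
      _ = max 1 ‖M‖ * Real.sqrt (a + b) := by
          rw [Real.sqrt_mul (sq_nonneg _), Real.sqrt_sq hmax]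
  calc Real.sqrt (a + c) ≤ max 1 ‖M‖ * Real.sqrt (a + b) := step1
    _ ≤ max 1 ‖M‖ * (‖Matrix.fromRows A B‖ * ‖x‖) := by
        exact mul_le_mul_of_nonneg_left hFle hmax
    _ = max 1 ‖M‖ * ‖Matrix.fromRows A B‖ * ‖x‖ := by ring

/-- The proxy-surface compression trick: if the far-field block `A[P,B]` factors exactly
through a proxy matrix `G` as `A[P,B] = M·G`, and `(S, R, T)` is an `ε`-accurate
interpolative decomposition of the stacked matrix `[A[O,B]; G]`, then the same skeleton
set `S` and interpolation matrix `T` give an interpolative decomposition of the full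
far-field block `[A[O,B]; A[P,B]]` with error at most `ε·max(1,‖M‖)·‖[A[O,B]; G]‖`. -/
theorem proxy_surface_id
    {O P n R S : Type*} [Fintype O] [Fintype P] [Fintype n] [Fintype R] [Fintype S]
    [DecidableEq O] [DecidableEq P] [DecidableEq n] [DecidableEq R] [DecidableEq S]
    (AOB : Matrix O (R ⊕ S) ℂ) (APB : Matrix P (R ⊕ S) ℂ)
    (M : Matrix P n ℂ) (G : Matrix n (R ⊕ S) ℂ)
    (hfact : APB = M * G)
    (T : Matrix S R ℂ) (ε : ℝ) (hε : 0 < ε)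
    (hID : ‖(Matrix.fromRows AOB G).submatrix id Sum.inl -
            (Matrix.fromRows AOB G).submatrix id Sum.inr * T‖ ≤
           ε * ‖Matrix.fromRows AOB G‖) :
    ‖(Matrix.fromRows AOB APB).submatrix id Sum.inl -
     (Matrix.fromRows AOB APB).submatrix id Sum.inr * T‖ ≤
      ε * max 1 ‖M‖ * ‖Matrix.fromRows AOB G‖ := by
  set E₁ : Matrix O R ℂ := AOB.submatrix id Sum.inl - AOB.submatrix id Sum.inr * T with hE₁
  set E₂ : Matrix n R ℂ := G.submatrix id Sum.inl - G.submatrix id Sum.inr * T with hE₂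
  have hstack : (Matrix.fromRows AOB G).submatrix id Sum.inl -
      (Matrix.fromRows AOB G).submatrix id Sum.inr * T = Matrix.fromRows E₁ E₂ := by
    rw [fromRows_submatrix_id, fromRows_submatrix_id, Matrix.fromRows_mul]
    ext i j
    cases i <;> simp [E₁, E₂]
  have hME₂ : M * E₂ = (M * G).submatrix id Sum.inl - (M * G).submatrix id Sum.inr * T := by
    rw [hE₂, Matrix.mul_sub, ← Matrix.mul_assoc, mul_submatrix_id', mul_submatrix_id']
  have hfull : (Matrix.fromRows AOB APB).submatrix id Sum.inl -
      (Matrix.fromRows AOB APB).submatrix id Sum.inr * T = Matrix.fromRows E₁ (M * E₂) := by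
    rw [fromRows_submatrix_id, fromRows_submatrix_id, Matrix.fromRows_mul]
    ext i j
    cases i with
    | inl i => simp [E₁]
    | inr i => simp [hfact, hME₂]
  rw [hfull]
  calc ‖Matrix.fromRows E₁ (M * E₂)‖ ≤ max 1 ‖M‖ * ‖Matrix.fromRows E₁ E₂‖ :=
        norm_fromRows_mul_le E₁ E₂ M
    _ ≤ max 1 ‖M‖ * (ε * ‖Matrix.fromRows AOB G‖) := by
        refine mul_le_mul_of_nonneg_left ?_ (le_trans zero_le_one (le_max_left _ _))
        rw [← hstack]; exact hID
    _ = ε * max 1 ‖M‖ * ‖Matrix.fromRows AOB G‖ := by ring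
end

section
/- With the notation of the exact strong skeletonization step: if A[R,F] = T*·A[S,F] and A[F,R] = A[F,S]·T, let B = U_T·A·L_T (so B[R,F] = B[F,R] = 0), assume B[R,R] is invertible, and let L, U be the block elimination matrices eliminating the (S,R), (N,R) and (R,S), (R,N) blocks of B using pivot B[R,R]. Then Z = L·B·U satisfies: Z[R,R] = B[R,R]; all other blocks in the R row and R column are zero; the (S,F), (N,F), (F,S), (F,N), (F,F) blocks of Z equal those of A. -/
open Matrix

variable {R S N F : Type*} [Fintype R] [Fintype S] [Fintype N] [Fintype F]
  [DecidableEq R] [DecidableEq S] [DecidableEq N] [DecidableEq F]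

/-- The block unit-triangular matrix `U_T`: identity except the `(R,S)` block is `-T*`. -/
def skelUT (T : Matrix S R ℂ) : Matrix (R ⊕ (S ⊕ (N ⊕ F))) (R ⊕ (S ⊕ (N ⊕ F))) ℂ :=
  1 + Matrix.of (fun i j =>
    match i, j with
    | Sum.inl r, Sum.inr (Sum.inl s) => -(Tᴴ r s)
    | _, _ => 0)

/-- The block unit-triangular matrix `L_T`: identity except the `(S,R)` block is `-T`. -/
def skelLT (T : Matrix S R ℂ) : Matrix (R ⊕ (S ⊕ (N ⊕ F))) (R ⊕ (S ⊕ (N ⊕ F))) ℂ :=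
  1 + Matrix.of (fun i j =>
    match i, j with
    | Sum.inr (Sum.inl s), Sum.inl r => -(T s r)
    | _, _ => 0)

/-- The block unit lower-triangular elimination matrix `L` with blocks
`-B[S,R]·B[R,R]⁻¹` and `-B[N,R]·B[R,R]⁻¹` in the `(S,R)` and `(N,R)` positions. -/
noncomputable def elimL (B : Matrix (R ⊕ (S ⊕ (N ⊕ F))) (R ⊕ (S ⊕ (N ⊕ F))) ℂ) :
    Matrix (R ⊕ (S ⊕ (N ⊕ F))) (R ⊕ (S ⊕ (N ⊕ F))) ℂ :=
  1 + Matrix.of (fun i j =>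
    match i, j with
    | Sum.inr (Sum.inl s), Sum.inl r =>
        -((B.submatrix (Sum.inr ∘ Sum.inl) Sum.inl * (B.submatrix Sum.inl Sum.inl)⁻¹) s r)
    | Sum.inr (Sum.inr (Sum.inl n)), Sum.inl r =>
        -((B.submatrix (Sum.inr ∘ Sum.inr ∘ Sum.inl) Sum.inl *
            (B.submatrix Sum.inl Sum.inl)⁻¹) n r)
    | _, _ => 0)

/-- The block unit upper-triangular elimination matrix `U` with blocks
`-B[R,R]⁻¹·B[R,S]` and `-B[R,R]⁻¹·B[R,N]` in the `(R,S)` and `(R,N)` positions. -/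
noncomputable def elimU (B : Matrix (R ⊕ (S ⊕ (N ⊕ F))) (R ⊕ (S ⊕ (N ⊕ F))) ℂ) :
    Matrix (R ⊕ (S ⊕ (N ⊕ F))) (R ⊕ (S ⊕ (N ⊕ F))) ℂ :=
  1 + Matrix.of (fun i j =>
    match i, j with
    | Sum.inl r, Sum.inr (Sum.inl s) =>
        -(((B.submatrix Sum.inl Sum.inl)⁻¹ * B.submatrix Sum.inl (Sum.inr ∘ Sum.inl)) r s)
    | Sum.inl r, Sum.inr (Sum.inr (Sum.inl n)) =>
        -(((B.submatrix Sum.inl Sum.inl)⁻¹ *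
            B.submatrix Sum.inl (Sum.inr ∘ Sum.inr ∘ Sum.inl)) r n)
    | _, _ => 0)


section SkelAux

variable {R S N F : Type*} [Fintype R] [Fintype S] [Fintype N] [Fintype F]
  [DecidableEq R] [DecidableEq S] [DecidableEq N] [DecidableEq F]

set_option linter.unusedSectionVars false

lemma skelUT_mul_inr (T : Matrix S R ℂ) (A : Matrix (R ⊕ (S ⊕ (N ⊕ F))) (R ⊕ (S ⊕ (N ⊕ F))) ℂ)
    (q : S ⊕ (N ⊕ F)) (j : R ⊕ (S ⊕ (N ⊕ F))) :
    (skelUT (N := N) (F := F) T * A) (Sum.inr q) j = A (Sum.inr q) j := by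
  simp only [skelUT, Matrix.add_mul, Matrix.one_mul, Matrix.add_apply]
  simp [Matrix.mul_apply]

lemma skelUT_mul_inl (T : Matrix S R ℂ) (A : Matrix (R ⊕ (S ⊕ (N ⊕ F))) (R ⊕ (S ⊕ (N ⊕ F))) ℂ)
    (r : R) (j : R ⊕ (S ⊕ (N ⊕ F))) :
    (skelUT (N := N) (F := F) T * A) (Sum.inl r) j
      = A (Sum.inl r) j - ∑ s, Tᴴ r s * A (Sum.inr (Sum.inl s)) j := by
  simp only [skelUT, Matrix.add_mul, Matrix.one_mul, Matrix.add_apply]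
  simp [Matrix.mul_apply, Fintype.sum_sum_type, sub_eq_add_neg, ← Finset.sum_neg_distrib]

lemma mul_skelLT_inr (T : Matrix S R ℂ) (M : Matrix (R ⊕ (S ⊕ (N ⊕ F))) (R ⊕ (S ⊕ (N ⊕ F))) ℂ)
    (i : R ⊕ (S ⊕ (N ⊕ F))) (q : S ⊕ (N ⊕ F)) :
    (M * skelLT (N := N) (F := F) T) i (Sum.inr q) = M i (Sum.inr q) := by
  simp only [skelLT, Matrix.mul_add, Matrix.mul_one, Matrix.add_apply]
  simp [Matrix.mul_apply]

lemma mul_skelLT_inl (T : Matrix S R ℂ) (M : Matrix (R ⊕ (S ⊕ (N ⊕ F))) (R ⊕ (S ⊕ (N ⊕ F))) ℂ)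
    (i : R ⊕ (S ⊕ (N ⊕ F))) (r : R) :
    (M * skelLT (N := N) (F := F) T) i (Sum.inl r)
      = M i (Sum.inl r) - ∑ s, M i (Sum.inr (Sum.inl s)) * T s r := by
  simp only [skelLT, Matrix.mul_add, Matrix.mul_one, Matrix.add_apply]
  simp [Matrix.mul_apply, Fintype.sum_sum_type, sub_eq_add_neg, ← Finset.sum_neg_distrib]

lemma elimL_eq (B : Matrix (R ⊕ (S ⊕ (N ⊕ F))) (R ⊕ (S ⊕ (N ⊕ F))) ℂ)
    (hFRz : ∀ f r, B (Sum.inr (Sum.inr (Sum.inr f))) (Sum.inl r) = 0) :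
    elimL B = Matrix.fromBlocks 1 0
      (-(B.submatrix Sum.inr Sum.inl * (B.submatrix Sum.inl Sum.inl)⁻¹)) 1 := by
  ext i j
  rcases i with r | (s | (n | f)) <;> rcases j with r' | (s' | (n' | f')) <;>
    simp [elimL, Matrix.one_apply, Matrix.mul_apply, hFRz]

lemma elimU_eq (B : Matrix (R ⊕ (S ⊕ (N ⊕ F))) (R ⊕ (S ⊕ (N ⊕ F))) ℂ)
    (hRFz : ∀ r f, B (Sum.inl r) (Sum.inr (Sum.inr (Sum.inr f))) = 0) :
    elimU B = Matrix.fromBlocks 1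
      (-((B.submatrix Sum.inl Sum.inl)⁻¹ * B.submatrix Sum.inl Sum.inr)) 0 1 := by
  ext i j
  rcases i with r | (s | (n | f)) <;> rcases j with r' | (s' | (n' | f')) <;>
    simp [elimU, Matrix.one_apply, Matrix.mul_apply, hRFz]

lemma elim_result (B : Matrix (R ⊕ (S ⊕ (N ⊕ F))) (R ⊕ (S ⊕ (N ⊕ F))) ℂ)
    (hFRz : ∀ f r, B (Sum.inr (Sum.inr (Sum.inr f))) (Sum.inl r) = 0)
    (hRFz : ∀ r f, B (Sum.inl r) (Sum.inr (Sum.inr (Sum.inr f))) = 0)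
    (hpivot : IsUnit (B.submatrix Sum.inl Sum.inl)) :
    elimL B * B * elimU B = Matrix.fromBlocks (B.submatrix Sum.inl Sum.inl) 0 0
      (B.submatrix Sum.inr Sum.inr -
        B.submatrix Sum.inr Sum.inl * (B.submatrix Sum.inl Sum.inl)⁻¹ *
          B.submatrix Sum.inl Sum.inr) := by
  have hPd : IsUnit (B.submatrix Sum.inl Sum.inl).det :=
    (Matrix.isUnit_iff_isUnit_det _).mp hpivot
  have hPinv : B.submatrix Sum.inl Sum.inl * (B.submatrix Sum.inl Sum.inl)⁻¹ = 1 :=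
    Matrix.mul_nonsing_inv _ hPd
  have hPinv' : (B.submatrix Sum.inl Sum.inl)⁻¹ * B.submatrix Sum.inl Sum.inl = 1 :=
    Matrix.nonsing_inv_mul _ hPd
  have hBfb : B = Matrix.fromBlocks (B.submatrix Sum.inl Sum.inl) (B.submatrix Sum.inl Sum.inr)
      (B.submatrix Sum.inr Sum.inl) (B.submatrix Sum.inr Sum.inr) := by
    ext i j; cases i <;> cases j <;> rfl
  rw [elimL_eq B hFRz, elimU_eq B hRFz]
  set P := B.submatrix Sum.inl Sum.inl with hP
  set B12 := B.submatrix Sum.inl Sum.inr with h12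
  set B21 := B.submatrix Sum.inr Sum.inl with h21
  set B22 := B.submatrix Sum.inr Sum.inr with h22
  rw [hBfb]
  rw [Matrix.fromBlocks_multiply, Matrix.fromBlocks_multiply]
  have c1 : B21 * P⁻¹ * P = B21 := by rw [Matrix.mul_assoc, hPinv', Matrix.mul_one]
  have c2 : P * (P⁻¹ * B12) = B12 := by rw [← Matrix.mul_assoc, hPinv, Matrix.one_mul]
  simp only [Matrix.one_mul, Matrix.mul_one, Matrix.zero_mul, Matrix.mul_zero,
    add_zero, zero_add, Matrix.neg_mul, Matrix.mul_neg, c1, c2, ← h12,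
    neg_add_cancel, add_neg_cancel, sub_eq_add_neg, Matrix.mul_assoc]
  congr 1
  abel

end SkelAux

/-- Exact strong skeletonization: after the interpolation step `B = U_T·A·L_T` (which zeros
out the `(R,F)` and `(F,R)` blocks), block elimination with pivot `B[R,R]` fully decouples
the redundant DOFs `R`, while all blocks involving the far field `F` (other than those in
the `R` row and column) remain unchanged from `A`. -/
theorem strong_skeletonization_elimination
    (A : Matrix (R ⊕ (S ⊕ (N ⊕ F))) (R ⊕ (S ⊕ (N ⊕ F))) ℂ)
    (T : Matrix S R ℂ)
    (eR : R → R ⊕ (S ⊕ (N ⊕ F))) (eS : S → R ⊕ (S ⊕ (N ⊕ F)))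
    (eN : N → R ⊕ (S ⊕ (N ⊕ F))) (eF : F → R ⊕ (S ⊕ (N ⊕ F)))
    (heR : eR = Sum.inl) (heS : eS = Sum.inr ∘ Sum.inl)
    (heN : eN = Sum.inr ∘ Sum.inr ∘ Sum.inl) (heF : eF = Sum.inr ∘ Sum.inr ∘ Sum.inr)
    (hRF : A.submatrix eR eF = Tᴴ * A.submatrix eS eF)
    (hFR : A.submatrix eF eR = A.submatrix eF eS * T)
    (B : Matrix (R ⊕ (S ⊕ (N ⊕ F))) (R ⊕ (S ⊕ (N ⊕ F))) ℂ)
    (hB : B = skelUT T * A * skelLT T)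
    (hpivot : IsUnit (B.submatrix eR eR))
    (Z : Matrix (R ⊕ (S ⊕ (N ⊕ F))) (R ⊕ (S ⊕ (N ⊕ F))) ℂ)
    (hZ : Z = elimL B * B * elimU B) :
    Z.submatrix eR eR = B.submatrix eR eR ∧
    (Z.submatrix eR eS = 0 ∧ Z.submatrix eR eN = 0 ∧ Z.submatrix eR eF = 0 ∧
     Z.submatrix eS eR = 0 ∧ Z.submatrix eN eR = 0 ∧ Z.submatrix eF eR = 0) ∧
    (Z.submatrix eS eF = A.submatrix eS eF ∧
     Z.submatrix eN eF = A.submatrix eN eF ∧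
     Z.submatrix eF eS = A.submatrix eF eS ∧
     Z.submatrix eF eN = A.submatrix eF eN ∧
     Z.submatrix eF eF = A.submatrix eF eF) := by
  subst heR heS heN heF
  have hQQ : ∀ q q', B (Sum.inr q) (Sum.inr q') = A (Sum.inr q) (Sum.inr q') := by
    intro q q'
    rw [hB, mul_skelLT_inr, skelUT_mul_inr]
  have hRFz : ∀ r f, B (Sum.inl r) (Sum.inr (Sum.inr (Sum.inr f))) = 0 := by
    intro r f
    have h := congrFun (congrFun hRF r) f
    simp only [Matrix.submatrix_apply, Matrix.mul_apply, Function.comp_apply] at h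
    rw [hB, mul_skelLT_inr, skelUT_mul_inl, h, sub_self]
  have hFRz : ∀ f r, B (Sum.inr (Sum.inr (Sum.inr f))) (Sum.inl r) = 0 := by
    intro f r
    have h := congrFun (congrFun hFR f) r
    simp only [Matrix.submatrix_apply, Matrix.mul_apply, Function.comp_apply] at h
    rw [hB, mul_skelLT_inl]
    simp only [skelUT_mul_inr]
    rw [h, sub_self]
  have hZfb : Z = Matrix.fromBlocks (B.submatrix Sum.inl Sum.inl) 0 0
      (B.submatrix Sum.inr Sum.inr -
        B.submatrix Sum.inr Sum.inl * (B.submatrix Sum.inl Sum.inl)⁻¹ *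
          B.submatrix Sum.inl Sum.inr) := by
    rw [hZ, elim_result B hFRz hRFz hpivot]
  refine ⟨?_, ⟨?_, ?_, ?_, ?_, ?_, ?_⟩, ?_, ?_, ?_, ?_, ?_⟩ <;>
    ext i j <;>
    simp [hZfb, Matrix.sub_apply, Matrix.mul_apply, hRFz, hFRz, hQQ]
end
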